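/- There is a constant c > 0 such that for every ω ≥ 1 and every Schwartz function f on ℝ³ = ℝ² × ℝ (variables (x,z)), one has Ẽ_ω(f) ≥ c ( ‖f‖²_{L²(ℝ³)} + ‖∇f‖²_{L²(ℝ³)} ), where ∇ is the full gradient on ℝ³. -/

import Mathlib

open MeasureTheory Complex

noncomputable section

/-- ℝ² with the Euclidean norm. -/
abbrev R2 : Type := EuclideanSpace ℝ (Fin 2)

/-- ℝ³ written as ℝ² × ℝ, points r = (x, z). -/
abbrev R3 : Type := R2 × ℝ

/-- Directional derivative of `f` at `p` in the direction `v`. -/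
def pd {E F : Type*} [NormedAddCommGroup E] [NormedSpace ℝ E]
    [NormedAddCommGroup F] [NormedSpace ℝ F] (v : E) (f : E → F) (p : E) : F :=
  fderiv ℝ f p v

/-- Second directional derivative in the direction `v`. -/
def pd2 {E F : Type*} [NormedAddCommGroup E] [NormedSpace ℝ E]
    [NormedAddCommGroup F] [NormedSpace ℝ F] (v : E) (f : E → F) (p : E) : F :=
  pd v (pd v f) p

/-- First coordinate direction in the x-plane. -/
def ex0 : R3 := (EuclideanSpace.single 0 1, 0)

/-- Second coordinate direction in the x-plane. -/
def ex1 : R3 := (EuclideanSpace.single 1 1, 0)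

/-- The z-direction. -/
def ez : R3 := (0, 1)

instance : (volume : MeasureTheory.Measure R3).IsAddHaarMeasure := by
  rw [MeasureTheory.Measure.volume_eq_prod]; infer_instance

/-- The full Laplacian on ℝ³ = ℝ² × ℝ. -/
def lap3 {F : Type*} [NormedAddCommGroup F] [NormedSpace ℝ F]
    (f : R3 → F) (p : R3) : F :=
  pd2 ex0 f p + pd2 ex1 f p + pd2 ez f p

/-- The operator `S² f = (1−ω)f − Δf + ω² z² f` on functions on ℝ³. -/
def S2op (ω : ℝ) (f : R3 → ℂ) (p : R3) : ℂ :=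
  ((1 - ω : ℝ) : ℂ) * f p - lap3 f p + ((ω ^ 2 * p.2 ^ 2 : ℝ) : ℂ) * f p
/-- The quadratic form
`Ẽ_ω(f) = ‖f‖² + ‖∇ₓf‖² + ω(‖∂_z f‖² + ‖z f‖² − ‖f‖²)` on L²(ℝ³). -/
def Etform (ω : ℝ) (f : R3 → ℂ) : ℝ :=
  (∫ p : R3, ‖f p‖ ^ 2) +
    ((∫ p : R3, ‖pd ex0 f p‖ ^ 2) + (∫ p : R3, ‖pd ex1 f p‖ ^ 2)) +
    ω * ((∫ p : R3, ‖pd ez f p‖ ^ 2) + (∫ p : R3, p.2 ^ 2 * ‖f p‖ ^ 2) -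
      (∫ p : R3, ‖f p‖ ^ 2))

open MeasureTheory Filter in
lemma oneDim (g g' : ℝ → ℂ) (hg : ∀ z, HasDerivAt g (g' z) z) (hg'c : Continuous g')
    (hi1 : Integrable (fun z : ℝ => ‖g z‖ ^ 2))
    (hi2 : Integrable (fun z : ℝ => ‖g' z‖ ^ 2))
    (hi3 : Integrable (fun z : ℝ => z ^ 2 * ‖g z‖ ^ 2))
    (htop : Tendsto (fun z : ℝ => z * ‖g z‖ ^ 2) atTop (nhds 0))
    (hbot : Tendsto (fun z : ℝ => z * ‖g z‖ ^ 2) atBot (nhds 0)) :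
    (∫ z : ℝ, ‖g z‖ ^ 2) ≤ (∫ z : ℝ, ‖g' z‖ ^ 2) + ∫ z : ℝ, z ^ 2 * ‖g z‖ ^ 2 := by
  have hgc : Continuous g := by
    rw [continuous_iff_continuousAt]; exact fun z => (hg z).continuousAt
  set T : ℝ → ℝ := fun z => (inner ℝ (g z) (g' z) : ℝ) + (inner ℝ (g' z) (g z) : ℝ) with hT
  set D : ℝ → ℝ := fun z => ‖g z‖ ^ 2 + z * T z with hDdef
  have hD : ∀ z, HasDerivAt (fun t => t * ‖g t‖ ^ 2) (D z) z := by
    intro z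
    have h1 : HasDerivAt (fun t => ‖g t‖ ^ 2) (T z) z := by
      have := (hg z).inner ℝ (hg z)
      simpa only [real_inner_self_eq_norm_sq, hT] using this
    have := (hasDerivAt_id' z).mul h1
    rw [one_mul] at this
    exact this
  have hTbound : ∀ z, |T z| ≤ 2 * (‖g z‖ * ‖g' z‖) := by
    intro z
    have h1 := abs_real_inner_le_norm (g z) (g' z)
    have h2 := abs_real_inner_le_norm (g' z) (g z)
    calc |T z| ≤ |(inner ℝ (g z) (g' z) : ℝ)| + |(inner ℝ (g' z) (g z) : ℝ)| := abs_add_le _ _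
    _ ≤ 2 * (‖g z‖ * ‖g' z‖) := by nlinarith [norm_nonneg (g z), norm_nonneg (g' z)]
  have hzT : ∀ z : ℝ, |z * T z| ≤ ‖g' z‖ ^ 2 + z ^ 2 * ‖g z‖ ^ 2 := by
    intro z
    have h1 := hTbound z
    have h2 : |z * T z| = |z| * |T z| := _root_.abs_mul _ _
    have h3 : |z| * |T z| ≤ |z| * (2 * (‖g z‖ * ‖g' z‖)) :=
      mul_le_mul_of_nonneg_left h1 (_root_.abs_nonneg z)
    nlinarith [sq_nonneg (|z| * ‖g z‖ - ‖g' z‖), _root_.sq_abs z, _root_.abs_nonneg z,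
      norm_nonneg (g z), norm_nonneg (g' z), _root_.abs_nonneg (T z)]
  have hDcont : Continuous D := by
    have : Continuous T := (hgc.inner hg'c).add (hg'c.inner hgc)
    continuity
  have hDint : Integrable D := by
    refine Integrable.mono' (hi1.add (hi2.add hi3)) hDcont.aestronglyMeasurable
      (Filter.Eventually.of_forall fun z => ?_)
    have h1 := hzT z
    have h2 : |D z| ≤ ‖g z‖ ^ 2 + |z * T z| := by
      calc |D z| ≤ |‖g z‖ ^ 2| + |z * T z| := abs_add_le _ _
      _ ≤ ‖g z‖ ^ 2 + |z * T z| := by rw [_root_.abs_of_nonneg (by positivity)]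
    simp only [Real.norm_eq_abs, Pi.add_apply]
    linarith
  have hint0 : (∫ z : ℝ, D z) = 0 := by
    have := integral_of_hasDerivAt_of_tendsto hD hDint hbot htop
    simpa using this
  have hmono : (∫ z : ℝ, (‖g z‖ ^ 2 - (‖g' z‖ ^ 2 + z ^ 2 * ‖g z‖ ^ 2))) ≤ ∫ z : ℝ, D z := by
    refine integral_mono (by exact hi1.sub (hi2.add hi3)) hDint fun z => ?_
    have h1 := hzT z
    have h2 : -(‖g' z‖ ^ 2 + z ^ 2 * ‖g z‖ ^ 2) ≤ z * T z := by
      have := neg_abs_le (z * T z); linarith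
    simp only [D]
    linarith
  have hi23 : Integrable (fun z : ℝ => ‖g' z‖ ^ 2 + z ^ 2 * ‖g z‖ ^ 2) := by
    exact hi2.add hi3
  rw [integral_sub hi1 hi23, integral_add hi2 hi3, hint0] at hmono
  linarith


open MeasureTheory Filter in
lemma schwartz_fiber_bound (F : SchwartzMap R3 ℂ) :
    ∃ M : ℝ, 0 < M ∧ ∀ p : R3, (1 + p.2 ^ 2) * ‖F p‖ ≤ M := by
  obtain ⟨C0, hC0pos, hC0⟩ := F.decay 0 0
  obtain ⟨C2, hC2pos, hC2⟩ := F.decay 2 0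
  refine ⟨C0 + C2, by positivity, fun p => ?_⟩
  have h0 : ‖F p‖ ≤ C0 := by simpa using hC0 p
  have h2' := hC2 p
  simp only [norm_iteratedFDeriv_zero] at h2'
  have hs : |p.2| ≤ ‖p‖ := by simpa using norm_snd_le p
  have hsq : p.2 ^ 2 ≤ ‖p‖ ^ 2 := by nlinarith [_root_.sq_abs p.2, _root_.abs_nonneg p.2, norm_nonneg p]
  nlinarith [norm_nonneg (F p), mul_le_mul_of_nonneg_right hsq (norm_nonneg (F p))]

set_option maxHeartbeats 1000000 in
open MeasureTheory Filter in
lemma schwartz_fiber_facts (F : SchwartzMap R3 ℂ) (x : R2) :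
    Integrable (fun z : ℝ => ‖F (x, z)‖ ^ 2) ∧
    Integrable (fun z : ℝ => z ^ 2 * ‖F (x, z)‖ ^ 2) ∧
    Tendsto (fun z : ℝ => z * ‖F (x, z)‖ ^ 2) atTop (nhds 0) ∧
    Tendsto (fun z : ℝ => z * ‖F (x, z)‖ ^ 2) atBot (nhds 0) := by
  obtain ⟨M, hMpos, hM⟩ := schwartz_fiber_bound F
  have hM' : ∀ z : ℝ, (1 + z ^ 2) * ‖F (x, z)‖ ≤ M := fun z => hM (x, z)
  have hpos : ∀ z : ℝ, (0:ℝ) < 1 + z ^ 2 := fun z => by positivity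
  have hgint : Integrable (fun z : ℝ => M ^ 2 / (1 + z ^ 2)) := by
    simp_rw [div_eq_mul_inv]
    exact integrable_inv_one_add_sq.const_mul _
  have hcont : Continuous fun z : ℝ => F (x, z) :=
    F.continuous.comp (continuous_const.prodMk continuous_id)
  have hsq : ∀ z : ℝ, ((1 + z ^ 2) * ‖F (x, z)‖) ^ 2 ≤ M ^ 2 := by
    intro z
    have h := hM' z
    have h2 : 0 ≤ (1 + z ^ 2) * ‖F (x, z)‖ := mul_nonneg (hpos z).le (norm_nonneg _)
    nlinarith [h, h2, hMpos]
  have hb1 : ∀ z : ℝ, ‖F (x, z)‖ ^ 2 ≤ M ^ 2 / (1 + z ^ 2) := by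
    intro z
    rw [le_div_iff₀ (hpos z)]
    nlinarith [hsq z, mul_nonneg (mul_nonneg (sq_nonneg ‖F (x, z)‖) (hpos z).le) (sq_nonneg z)]
  have hb2 : ∀ z : ℝ, z ^ 2 * ‖F (x, z)‖ ^ 2 ≤ M ^ 2 / (1 + z ^ 2) := by
    intro z
    rw [le_div_iff₀ (hpos z)]
    nlinarith [hsq z, mul_nonneg (sq_nonneg ‖F (x, z)‖) (hpos z).le]
  have hb3 : ∀ z : ℝ, |z * ‖F (x, z)‖ ^ 2| ≤ M ^ 2 / (1 + z ^ 2) := by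
    intro z
    rw [le_div_iff₀ (hpos z), _root_.abs_mul, _root_.abs_of_nonneg (show (0:ℝ) ≤ ‖F (x, z)‖ ^ 2 by positivity)]
    have hzu : |z| ≤ 1 + z ^ 2 := by nlinarith [sq_nonneg (|z| - 1), _root_.sq_abs z]
    nlinarith [hsq z, mul_nonneg (mul_nonneg (hpos z).le (sq_nonneg ‖F (x, z)‖))
      (show (0:ℝ) ≤ 1 + z ^ 2 - |z| by linarith)]
  have int1 : Integrable (fun z : ℝ => ‖F (x, z)‖ ^ 2) := by
    refine Integrable.mono' hgint ((hcont.norm.pow 2).aestronglyMeasurable)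
      (Filter.Eventually.of_forall fun z => ?_)
    rw [Real.norm_eq_abs, _root_.abs_of_nonneg (by positivity)]; exact hb1 z
  have int2 : Integrable (fun z : ℝ => z ^ 2 * ‖F (x, z)‖ ^ 2) := by
    refine Integrable.mono' hgint (((continuous_pow 2).mul (hcont.norm.pow 2)).aestronglyMeasurable)
      (Filter.Eventually.of_forall fun z => ?_)
    rw [Real.norm_eq_abs, _root_.abs_of_nonneg (by positivity)]; exact hb2 z
  have htt : Tendsto (fun z : ℝ => M ^ 2 / (1 + z ^ 2)) atTop (nhds 0) :=
    Tendsto.div_atTop tendsto_const_nhds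
      (tendsto_atTop_add_const_left _ 1 (tendsto_pow_atTop two_ne_zero))
  have htb : Tendsto (fun z : ℝ => M ^ 2 / (1 + z ^ 2)) atBot (nhds 0) := by
    refine Tendsto.div_atTop tendsto_const_nhds (tendsto_atTop_add_const_left _ 1 ?_)
    have hneg : Tendsto (fun z : ℝ => -z) atBot atTop := tendsto_neg_atBot_atTop
    have := (tendsto_pow_atTop (n := 2) two_ne_zero).comp hneg
    refine this.congr fun z => ?_
    simp [Function.comp]
  exact ⟨int1, int2,
    squeeze_zero_norm (fun z => by rw [Real.norm_eq_abs]; exact hb3 z) htt,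
    squeeze_zero_norm (fun z => by rw [Real.norm_eq_abs]; exact hb3 z) htb⟩

open MeasureTheory Filter in
lemma schwartz_global_int_sq (G : SchwartzMap R3 ℂ) :
    Integrable (fun p : R3 => ‖G p‖ ^ 2) := by
  obtain ⟨C, hCpos, hC⟩ := G.decay 0 0
  have h0 : ∀ p : R3, ‖G p‖ ≤ C := fun p => by simpa using hC p
  refine Integrable.mono' ((G.integrable (μ := volume)).norm.const_mul C)
    ((G.continuous.norm.pow 2).aestronglyMeasurable)
    (Filter.Eventually.of_forall fun p => ?_)
  rw [Real.norm_eq_abs, _root_.abs_of_nonneg (by positivity)]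
  nlinarith [h0 p, norm_nonneg (G p)]

open MeasureTheory Filter in
lemma schwartz_global_int_zsq (F : SchwartzMap R3 ℂ) :
    Integrable (fun p : R3 => p.2 ^ 2 * ‖F p‖ ^ 2) := by
  obtain ⟨C, hCpos, hC⟩ := F.decay 0 0
  have h0 : ∀ p : R3, ‖F p‖ ≤ C := fun p => by simpa using hC p
  refine Integrable.mono' ((F.integrable_pow_mul volume 2).const_mul C)
    (((continuous_snd.pow 2).mul (F.continuous.norm.pow 2)).aestronglyMeasurable)
    (Filter.Eventually.of_forall fun p => ?_)
  rw [Real.norm_eq_abs, _root_.abs_of_nonneg (by positivity)]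
  have hs : |p.2| ≤ ‖p‖ := by simpa using norm_snd_le p
  have h1 : p.2 ^ 2 ≤ ‖p‖ ^ 2 := by nlinarith [_root_.sq_abs p.2, _root_.abs_nonneg p.2, norm_nonneg p]
  nlinarith [h0 p, norm_nonneg (F p), sq_nonneg ‖p‖,
    mul_le_mul_of_nonneg_right h1 (sq_nonneg ‖F p‖),
    mul_nonneg (sq_nonneg ‖p‖) (norm_nonneg (F p))]

open MeasureTheory Filter in
lemma key_ineq (F : SchwartzMap R3 ℂ) :
    (∫ p : R3, ‖F p‖ ^ 2) ≤
      (∫ p : R3, ‖pd ez (⇑F) p‖ ^ 2) + ∫ p : R3, p.2 ^ 2 * ‖F p‖ ^ 2 := by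
  set F' : SchwartzMap R3 ℂ := LineDeriv.lineDerivOpCLM ℝ (SchwartzMap R3 ℂ) ez F with hF'def
  have hF' : ∀ p : R3, pd ez (⇑F) p = F' p := fun p => by
    rw [hF'def]; simp [pd, LineDeriv.lineDerivOpCLM_apply, SchwartzMap.lineDerivOp_apply_eq_fderiv]
  simp_rw [hF']
  have int0 := schwartz_global_int_sq F
  have int2 := schwartz_global_int_sq F'
  have int3 := schwartz_global_int_zsq F
  have int23 : Integrable (fun p : R3 => ‖F' p‖ ^ 2 + p.2 ^ 2 * ‖F p‖ ^ 2) := by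
    exact int2.add int3
  have hvol : (volume : Measure R3) = (volume : Measure R2).prod volume :=
    Measure.volume_eq_prod _ _
  have int0' : Integrable (fun p : R3 => ‖F p‖ ^ 2) ((volume : Measure R2).prod volume) := by
    rw [← hvol]; exact int0
  have int23' : Integrable (fun p : R3 => ‖F' p‖ ^ 2 + p.2 ^ 2 * ‖F p‖ ^ 2)
      ((volume : Measure R2).prod volume) := by
    rw [← hvol]; exact int23
  have e0 : (∫ p : R3, ‖F p‖ ^ 2) = ∫ x : R2, ∫ z : ℝ, ‖F (x, z)‖ ^ 2 := by
    rw [hvol]; exact integral_prod _ int0'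
  have e23 : (∫ p : R3, (‖F' p‖ ^ 2 + p.2 ^ 2 * ‖F p‖ ^ 2)) =
      ∫ x : R2, ∫ z : ℝ, (‖F' (x, z)‖ ^ 2 + z ^ 2 * ‖F (x, z)‖ ^ 2) := by
    rw [hvol]; exact integral_prod _ int23'
  have m0 : Integrable (fun x : R2 => ∫ z : ℝ, ‖F (x, z)‖ ^ 2) := int0'.integral_prod_left
  have m23 : Integrable (fun x : R2 => ∫ z : ℝ, (‖F' (x, z)‖ ^ 2 + z ^ 2 * ‖F (x, z)‖ ^ 2)) :=
    int23'.integral_prod_left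
  have hsum : (∫ p : R3, ‖F' p‖ ^ 2) + (∫ p : R3, p.2 ^ 2 * ‖F p‖ ^ 2) =
      ∫ p : R3, (‖F' p‖ ^ 2 + p.2 ^ 2 * ‖F p‖ ^ 2) := (integral_add int2 int3).symm
  rw [e0, hsum, e23]
  refine integral_mono m0 m23 fun x => ?_
  obtain ⟨i1, i3, ht, hb⟩ := schwartz_fiber_facts F x
  obtain ⟨i2, -, -, -⟩ := schwartz_fiber_facts F' x
  have hg : ∀ z : ℝ, HasDerivAt (fun t : ℝ => F (x, t)) (F' (x, z)) z := by
    intro z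
    have h1 : HasFDerivAt (⇑F) (fderiv ℝ (⇑F) (x, z)) (x, z) :=
      (F.differentiable.differentiableAt).hasFDerivAt
    have h2 : HasDerivAt (fun t : ℝ => ((x, t) : R3)) (((0 : R2), (1:ℝ)) : R3) z :=
      (hasDerivAt_const z x).prodMk (hasDerivAt_id z)
    have h3 := h1.comp_hasDerivAt z h2
    have : F' (x, z) = fderiv ℝ (⇑F) (x, z) ((0 : R2), (1:ℝ)) := by
      rw [hF'def]; simp [LineDeriv.lineDerivOpCLM_apply, SchwartzMap.lineDerivOp_apply_eq_fderiv, ez]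
    rw [this]
    exact h3
  have hg'c : Continuous fun z : ℝ => F' (x, z) :=
    F'.continuous.comp (continuous_const.prodMk continuous_id)
  have h1d := oneDim (fun z => F (x, z)) (fun z => F' (x, z)) hg hg'c i1 i2 i3 ht hb
  rw [integral_add i2 i3]
  exact h1d

/-- there is `c > 0` such that for every `ω ≥ 1` and every Schwartz
function `f` on ℝ³, `Ẽ_ω(f) ≥ c (‖f‖² + ‖∇f‖²)`. -/
theorem Etform_coercive :
    ∃ c : ℝ, 0 < c ∧ ∀ ω : ℝ, 1 ≤ ω → ∀ f : SchwartzMap R3 ℂ,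
      c * ((∫ p : R3, ‖f p‖ ^ 2) +
          ((∫ p : R3, ‖pd ex0 (⇑f) p‖ ^ 2) + (∫ p : R3, ‖pd ex1 (⇑f) p‖ ^ 2) +
            (∫ p : R3, ‖pd ez (⇑f) p‖ ^ 2))) ≤
        Etform ω (⇑f) := by
  refine ⟨1/2, by norm_num, fun ω hω f => ?_⟩
  have hK := key_ineq f
  have h0 : 0 ≤ ∫ p : R3, ‖f p‖ ^ 2 := integral_nonneg fun p => by positivity
  have h1 : 0 ≤ ∫ p : R3, ‖pd ex0 (⇑f) p‖ ^ 2 := integral_nonneg fun p => by positivity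
  have h2 : 0 ≤ ∫ p : R3, ‖pd ex1 (⇑f) p‖ ^ 2 := integral_nonneg fun p => by positivity
  have h3 : 0 ≤ ∫ p : R3, ‖pd ez (⇑f) p‖ ^ 2 := integral_nonneg fun p => by positivity
  have hB : 0 ≤ ∫ p : R3, p.2 ^ 2 * ‖f p‖ ^ 2 := integral_nonneg fun p => by positivity
  simp only [Etform]
  have ht : 0 ≤ (∫ p : R3, ‖pd ez (⇑f) p‖ ^ 2) + (∫ p : R3, p.2 ^ 2 * ‖f p‖ ^ 2) -
      (∫ p : R3, ‖f p‖ ^ 2) := by linarith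
  have hωt := le_mul_of_one_le_left ht hω
  have hωt0 : 0 ≤ ω * ((∫ p : R3, ‖pd ez (⇑f) p‖ ^ 2) + (∫ p : R3, p.2 ^ 2 * ‖f p‖ ^ 2) -
      (∫ p : R3, ‖f p‖ ^ 2)) := mul_nonneg (le_trans zero_le_one hω) ht
  linarith
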